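/- Let (D, ω) be a construction data over a monoidal category V with cocontinuous tensor product, and let T be the associated bimonad. Then the assignment x ↦ (ω(x), ∂_x) defines a strong monoidal functor ω̃ : D → Comod_T lifting ω, and the pair (T, ω̃) is universal: for any bimonad T' on V and any strict monoidal functor ω' : D → Comod_{T'} with U^{T'} ∘ ω' = ω, there is a unique morphism of bimonads φ : T → T' such that ω' = φ_♯ ∘ ω̃, where φ_♯ : Comod_T → Comod_{T'} is the functor induced by φ. -/

import Mathlib

namespace CData

open CategoryTheory MonoidalCategory CategoryTheory.Functor

universe v₁ v₂ u₁ u₂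

variable {D : Type u₁} [Category.{v₁} D] [MonoidalCategory D]
variable {V : Type u₂} [Category.{v₂} V] [MonoidalCategory V]

/-- A construction data over `V`: a (essentially small) monoidal category `D`, a strong
monoidal functor `ω : D ⥤ V` such that every `ω x` has a right dual `dual x` (in the
convention `ev : ω x ⊗ (ω x)^∨ ⟶ 𝟙`, `coev : 𝟙 ⟶ (ω x)^∨ ⊗ ω x`), together with a choice
of the coends `T M = ∫^{x} ω x ⊗ M ⊗ (ω x)^∨`, packaged via their universal property.
It also records the transpose `dmap` of morphisms and the comparison maps `d0`, `d2`
expressing the monoidality of the right duality functor. -/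
structure ConstructionData (ω : D ⥤ V) [ω.Monoidal] where
  dual : D → V
  ev : ∀ x : D, ω.obj x ⊗ dual x ⟶ 𝟙_ V
  coev : ∀ x : D, 𝟙_ V ⟶ dual x ⊗ ω.obj x
  zig : ∀ x : D,
    (ρ_ (ω.obj x)).inv ≫ (ω.obj x ◁ coev x) ≫ (α_ (ω.obj x) (dual x) (ω.obj x)).inv ≫
      (ev x ▷ ω.obj x) ≫ (λ_ (ω.obj x)).hom = 𝟙 (ω.obj x)
  zag : ∀ x : D,
    (λ_ (dual x)).inv ≫ (coev x ▷ dual x) ≫ (α_ (dual x) (ω.obj x) (dual x)).hom ≫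
      (dual x ◁ ev x) ≫ (ρ_ (dual x)).hom = 𝟙 (dual x)
  /-- the transpose `ω(f)^∨ : dual y ⟶ dual x` of `ω f` -/
  dmap : ∀ {x y : D}, (x ⟶ y) → (dual y ⟶ dual x)
  dmap_spec : ∀ {x y : D} (f : x ⟶ y),
    dmap f = (λ_ (dual y)).inv ≫ (coev x ▷ dual y) ≫
      (α_ (dual x) (ω.obj x) (dual y)).hom ≫ (dual x ◁ (ω.map f ▷ dual y)) ≫
      (dual x ◁ ev y) ≫ (ρ_ (dual x)).hom
  /-- the comparison `ϑ₀`-type map `𝟙 ⟶ (ω 𝟙)^∨`, i.e. `ω̌₀` -/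
  d0 : 𝟙_ V ⟶ dual (𝟙_ D)
  d0_spec : (LaxMonoidal.ε ω ⊗ₘ d0) ≫ ev (𝟙_ D) = (λ_ (𝟙_ V)).hom
  /-- the comparison map `ω̌² : (ω y)^∨ ⊗ (ω x)^∨ ⟶ (ω (x ⊗ y))^∨` -/
  d2 : ∀ x y : D, dual y ⊗ dual x ⟶ dual (x ⊗ y)
  d2_spec : ∀ x y : D,
    (LaxMonoidal.μ ω x y ▷ (dual y ⊗ dual x)) ≫ (ω.obj (x ⊗ y) ◁ d2 x y) ≫ ev (x ⊗ y) =
      (α_ (ω.obj x) (ω.obj y) (dual y ⊗ dual x)).hom ≫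
        (ω.obj x ◁ (α_ (ω.obj y) (dual y) (dual x)).inv) ≫
        (ω.obj x ◁ (ev y ▷ dual x)) ≫ (ω.obj x ◁ (λ_ (dual x)).hom) ≫ ev x
  /-- the coend `T M = ∫^{x ∈ D} ω x ⊗ M ⊗ (ω x)^∨` -/
  T : V ⥤ V
  /-- the universal dinatural transformation -/
  i : ∀ (x : D) (M : V), (ω.obj x ⊗ M) ⊗ dual x ⟶ T.obj M
  dinat : ∀ {x y : D} (f : x ⟶ y) (M : V),
    ((ω.map f ▷ M) ▷ dual y) ≫ i y M = ((ω.obj x ⊗ M) ◁ dmap f) ≫ i x M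
  nat : ∀ (x : D) {M N : V} (g : M ⟶ N),
    ((ω.obj x ◁ g) ▷ dual x) ≫ i x N = i x M ≫ T.map g
  universal : ∀ (M N : V) (f : ∀ x : D, (ω.obj x ⊗ M) ⊗ dual x ⟶ N),
    (∀ {x y : D} (h : x ⟶ y),
      ((ω.map h ▷ M) ▷ dual y) ≫ f y = ((ω.obj x ⊗ M) ◁ dmap h) ≫ f x) →
    ∃! g : T.obj M ⟶ N, ∀ x : D, i x M ≫ g = f x

variable {ω : D ⥤ V} [ω.Monoidal]

/-- The axioms of a bimonad, for an endofunctor with structure morphisms given as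
plain families. -/
structure IsBimonadFam (T : V ⥤ V)
    (μT : ∀ M : V, T.obj (T.obj M) ⟶ T.obj M)
    (ηT : ∀ M : V, M ⟶ T.obj M)
    (δT : ∀ M N : V, T.obj (M ⊗ N) ⟶ T.obj M ⊗ T.obj N)
    (εT : T.obj (𝟙_ V) ⟶ 𝟙_ V) : Prop where
  μ_natural : ∀ {M N : V} (f : M ⟶ N), T.map (T.map f) ≫ μT N = μT M ≫ T.map f
  η_natural : ∀ {M N : V} (f : M ⟶ N), f ≫ ηT N = ηT M ≫ T.map f
  δ_natural : ∀ {M M' N N' : V} (f : M ⟶ M') (g : N ⟶ N'),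
    T.map (f ⊗ₘ g) ≫ δT M' N' = δT M N ≫ (T.map f ⊗ₘ T.map g)
  mul_assoc : ∀ M : V, T.map (μT M) ≫ μT M = μT (T.obj M) ≫ μT M
  mul_unit_left : ∀ M : V, ηT (T.obj M) ≫ μT M = 𝟙 (T.obj M)
  mul_unit_right : ∀ M : V, T.map (ηT M) ≫ μT M = 𝟙 (T.obj M)
  comul_coassoc : ∀ M N P : V,
    δT (M ⊗ N) P ≫ (δT M N ▷ T.obj P) ≫ (α_ (T.obj M) (T.obj N) (T.obj P)).hom =
      T.map (α_ M N P).hom ≫ δT M (N ⊗ P) ≫ (T.obj M ◁ δT N P)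
  comul_counit_left : ∀ M : V,
    δT (𝟙_ V) M ≫ (εT ▷ T.obj M) ≫ (λ_ (T.obj M)).hom = T.map (λ_ M).hom
  comul_counit_right : ∀ M : V,
    δT M (𝟙_ V) ≫ (T.obj M ◁ εT) ≫ (ρ_ (T.obj M)).hom = T.map (ρ_ M).hom
  μ_comonoidal : ∀ M N : V,
    μT (M ⊗ N) ≫ δT M N =
      T.map (δT M N) ≫ δT (T.obj M) (T.obj N) ≫ (μT M ⊗ₘ μT N)
  μ_counit : μT (𝟙_ V) ≫ εT = T.map εT ≫ εT
  η_comonoidal : ∀ M N : V, ηT (M ⊗ N) ≫ δT M N = ηT M ⊗ₘ ηT N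
  η_counit : ηT (𝟙_ V) ≫ εT = 𝟙 (𝟙_ V)

variable (cd : ConstructionData ω)

/-- The defining equation of the multiplication `μ` of the bimonad `T`
(on the universal dinatural transformations). -/
def MuEq (μT : ∀ M : V, cd.T.obj (cd.T.obj M) ⟶ cd.T.obj M) : Prop :=
  ∀ (x y : D) (M : V),
    ((ω.obj x ◁ cd.i y M) ▷ cd.dual x) ≫ cd.i x (cd.T.obj M) ≫ μT M =
      (𝟙 ((ω.obj x ⊗ ((ω.obj y ⊗ M) ⊗ cd.dual y)) ⊗ cd.dual x) ⊗≫
        ((LaxMonoidal.μ ω x y ▷ M) ▷ (cd.dual y ⊗ cd.dual x))) ≫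
        ((ω.obj (x ⊗ y) ⊗ M) ◁ cd.d2 x y) ≫ cd.i (x ⊗ y) M

/-- The defining equation of the unit `η` of the bimonad `T`. -/
def EtaEq (ηT : ∀ M : V, M ⟶ cd.T.obj M) : Prop :=
  ∀ M : V,
    ηT M = (λ_ M).inv ≫ (LaxMonoidal.ε ω ▷ M) ≫ (ρ_ (ω.obj (𝟙_ D) ⊗ M)).inv ≫
      ((ω.obj (𝟙_ D) ⊗ M) ◁ cd.d0) ≫ cd.i (𝟙_ D) M

/-- The defining equation of the comultiplication `δ` of the bimonad `T`. -/
def DeltaEq (δT : ∀ M N : V, cd.T.obj (M ⊗ N) ⟶ cd.T.obj M ⊗ cd.T.obj N) : Prop :=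
  ∀ (x : D) (M N : V),
    cd.i x (M ⊗ N) ≫ δT M N =
      (𝟙 ((ω.obj x ⊗ (M ⊗ N)) ⊗ cd.dual x) ⊗≫
        ((ω.obj x ⊗ M) ◁ (cd.coev x ▷ (N ⊗ cd.dual x))) ⊗≫
        (cd.i x M ⊗ₘ cd.i x N))

/-- The defining equation of the counit `ε` of the bimonad `T`. -/
def EpsEq (εT : cd.T.obj (𝟙_ V) ⟶ 𝟙_ V) : Prop :=
  ∀ x : D, cd.i x (𝟙_ V) ≫ εT = ((ρ_ (ω.obj x)).hom ▷ cd.dual x) ≫ cd.ev x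


variable (ω) in
/-- A construction data together with the structure morphisms of the associated bimonad
`T` (defined by the equations of Theorem 3.2) and the bimonad axioms. -/
structure FRTData where
  cd : ConstructionData ω
  μT : ∀ M : V, cd.T.obj (cd.T.obj M) ⟶ cd.T.obj M
  ηT : ∀ M : V, M ⟶ cd.T.obj M
  δT : ∀ M N : V, cd.T.obj (M ⊗ N) ⟶ cd.T.obj M ⊗ cd.T.obj N
  εT : cd.T.obj (𝟙_ V) ⟶ 𝟙_ V
  hμ : MuEq cd μT
  hη : EtaEq cd ηT
  hδ : DeltaEq cd δT
  hε : EpsEq cd εT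
  bimonad : IsBimonadFam cd.T μT ηT δT εT

variable (cd : ConstructionData ω)

/-- The natural transformation `∂_x(M) : ω x ⊗ M ⟶ T M ⊗ ω x`. -/
def par (x : D) (M : V) : ω.obj x ⊗ M ⟶ cd.T.obj M ⊗ ω.obj x :=
  (ρ_ (ω.obj x ⊗ M)).inv ≫ ((ω.obj x ⊗ M) ◁ cd.coev x) ≫
    (α_ (ω.obj x ⊗ M) (cd.dual x) (ω.obj x)).inv ≫ (cd.i x M ▷ ω.obj x)

/-- The conditions for a family `β x M : ω x ⊗ M ⟶ T' M ⊗ ω x` to define a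
(strict monoidal, comonoidal-compatible) lift `ω' : D ⥤ Comod_{T'}` of `ω` to the
category of comodules over a bimonad `(T', μ', η', δ', ε')`, with `U^{T'} ∘ ω' = ω`
as monoidal functors. -/
structure IsComodLift (T' : V ⥤ V)
    (μ' : ∀ M : V, T'.obj (T'.obj M) ⟶ T'.obj M)
    (η' : ∀ M : V, M ⟶ T'.obj M)
    (δ' : ∀ M N : V, T'.obj (M ⊗ N) ⟶ T'.obj M ⊗ T'.obj N)
    (ε' : T'.obj (𝟙_ V) ⟶ 𝟙_ V)
    (β : ∀ (x : D) (M : V), ω.obj x ⊗ M ⟶ T'.obj M ⊗ ω.obj x) : Prop where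
  nat_M : ∀ (x : D) {M N : V} (g : M ⟶ N),
    (ω.obj x ◁ g) ≫ β x N = β x M ≫ (T'.map g ▷ ω.obj x)
  nat_x : ∀ {x y : D} (f : x ⟶ y) (M : V),
    (ω.map f ▷ M) ≫ β y M = β x M ≫ (T'.obj M ◁ ω.map f)
  comod_tensor : ∀ (x : D) (M N : V),
    β x (M ⊗ N) ≫ (δ' M N ▷ ω.obj x) =
      (α_ (ω.obj x) M N).inv ≫ (β x M ▷ N) ≫ (α_ (T'.obj M) (ω.obj x) N).hom ≫
        (T'.obj M ◁ β x N) ≫ (α_ (T'.obj M) (T'.obj N) (ω.obj x)).inv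
  comod_unit : ∀ x : D,
    β x (𝟙_ V) ≫ (ε' ▷ ω.obj x) ≫ (λ_ (ω.obj x)).hom = (ρ_ (ω.obj x)).hom
  lift_tensor : ∀ (x y : D) (M : V),
    (α_ (ω.obj x) (ω.obj y) M).hom ≫ (ω.obj x ◁ β y M) ≫
      (α_ (ω.obj x) (T'.obj M) (ω.obj y)).inv ≫ (β x (T'.obj M) ▷ ω.obj y) ≫
      ((μ' M ▷ ω.obj x) ▷ ω.obj y) ≫ (α_ (T'.obj M) (ω.obj x) (ω.obj y)).hom =
    (LaxMonoidal.μ ω x y ▷ M) ≫ β (x ⊗ y) M ≫ (T'.obj M ◁ OplaxMonoidal.δ ω x y)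
  lift_unit : ∀ M : V,
    (λ_ M).inv ≫ (LaxMonoidal.ε ω ▷ M) ≫ β (𝟙_ D) M ≫
      (T'.obj M ◁ OplaxMonoidal.η ω) ≫ (ρ_ (T'.obj M)).hom = η' M

variable (fd : FRTData ω)

section Aux

/-- The duality `(dual x, ω x)` is an exact pairing in the sense of mathlib. -/
def ConstructionData.pairing (x : D) : ExactPairing (cd.dual x) (ω.obj x) where
  coevaluation' := cd.coev x
  evaluation' := cd.ev x
  coevaluation_evaluation' := by
    rw [← cancel_epi (ρ_ (ω.obj x)).inv, ← cancel_mono (λ_ (ω.obj x)).hom]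
    simpa using cd.zig x
  evaluation_coevaluation' := by
    rw [← cancel_epi (λ_ (cd.dual x)).inv, ← cancel_mono (ρ_ (cd.dual x)).hom]
    simpa using cd.zag x

/-- Transposition on the right: `(X ⊗ (ω x)ᘁ ⟶ Z) ≃ (X ⟶ Z ⊗ ω x)`. -/
noncomputable def trE (x : D) (X Z : V) : (X ⊗ cd.dual x ⟶ Z) ≃ (X ⟶ Z ⊗ ω.obj x) :=
  letI := cd.pairing x
  tensorRightHomEquiv X (cd.dual x) (ω.obj x) Z

lemma trE_apply (x : D) {X Z : V} (g : X ⊗ cd.dual x ⟶ Z) :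
    trE cd x X Z g = (ρ_ X).inv ≫ (X ◁ cd.coev x) ≫ (α_ X (cd.dual x) (ω.obj x)).inv ≫
      (g ▷ ω.obj x) := rfl

lemma trE_symm_apply (x : D) {X Z : V} (f : X ⟶ Z ⊗ ω.obj x) :
    (trE cd x X Z).symm f = (f ▷ cd.dual x) ≫ (α_ Z (ω.obj x) (cd.dual x)).hom ≫
      (Z ◁ cd.ev x) ≫ (ρ_ Z).hom := rfl

lemma par_eq_trE (x : D) (M : V) : par cd x M = trE cd x _ _ (cd.i x M) := rfl

lemma trE_comp (x : D) {X Z Z' : V} (g : X ⊗ cd.dual x ⟶ Z) (h : Z ⟶ Z') :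
    trE cd x X Z' (g ≫ h) = trE cd x X Z g ≫ (h ▷ ω.obj x) := by
  letI := cd.pairing x
  exact tensorRightHomEquiv_naturality g h

lemma trE_symm_comp (x : D) {X Z Z' : V} (f : X ⟶ Z ⊗ ω.obj x) (h : Z ⟶ Z') :
    (trE cd x X Z').symm (f ≫ (h ▷ ω.obj x)) = (trE cd x X Z).symm f ≫ h := by
  rw [Equiv.symm_apply_eq, trE_comp, Equiv.apply_symm_apply]

lemma trE_pre (x : D) {X X' Z : V} (u : X ⟶ X') (g : X' ⊗ cd.dual x ⟶ Z) :
    trE cd x X Z ((u ▷ cd.dual x) ≫ g) = u ≫ trE cd x X' Z g := by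
  letI := cd.pairing x
  rw [Equiv.apply_eq_iff_eq_symm_apply]
  exact ((tensorRightHomEquiv_symm_naturality u ((trE cd x X' Z) g)).trans
    (congrArg (fun t => u ▷ cd.dual x ≫ t) ((trE cd x X' Z).symm_apply_apply g))).symm

/-- Transposition on the left: `(ω x ⊗ X ⟶ Z) ≃ (X ⟶ (ω x)ᘁ ⊗ Z)`. -/
noncomputable def tlE (x : D) (X Z : V) : (ω.obj x ⊗ X ⟶ Z) ≃ (X ⟶ cd.dual x ⊗ Z) :=
  letI := cd.pairing x
  tensorLeftHomEquiv X (cd.dual x) (ω.obj x) Z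

lemma tlE_symm_apply (x : D) {X Z : V} (f : X ⟶ cd.dual x ⊗ Z) :
    (tlE cd x X Z).symm f = (ω.obj x ◁ f) ≫ (α_ (ω.obj x) (cd.dual x) Z).inv ≫
      (cd.ev x ▷ Z) ≫ (λ_ Z).hom := rfl

lemma tlE_pre (x : D) {X X' Z : V} (u : X ⟶ X') (g : ω.obj x ⊗ X' ⟶ Z) :
    tlE cd x X Z ((ω.obj x ◁ u) ≫ g) = u ≫ tlE cd x X' Z g := by
  letI := cd.pairing x
  rw [Equiv.apply_eq_iff_eq_symm_apply]
  exact ((tensorLeftHomEquiv_symm_naturality u ((tlE cd x X' Z) g)).trans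
    (congrArg (fun t => ω.obj x ◁ u ≫ t) ((tlE cd x X' Z).symm_apply_apply g))).symm

lemma zig'' (x : D) :
    ω.obj x ◁ cd.coev x ⊗≫ cd.ev x ▷ ω.obj x = ⊗𝟙.hom := by
  letI := cd.pairing x
  exact ExactPairing.coevaluation_evaluation'' (cd.dual x) (ω.obj x)

lemma zag'' (x : D) :
    cd.coev x ▷ cd.dual x ⊗≫ cd.dual x ◁ cd.ev x = ⊗𝟙.hom := by
  letI := cd.pairing x
  exact ExactPairing.evaluation_coevaluation'' (cd.dual x) (ω.obj x)

/-- Morphisms into a dual are determined by their pairing with the evaluation. -/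
lemma dual_ext (x : D) {K : V} (u v : K ⟶ cd.dual x)
    (h : (ω.obj x ◁ u) ≫ cd.ev x = (ω.obj x ◁ v) ≫ cd.ev x) : u = v := by
  have key : ∀ w : K ⟶ cd.dual x,
      (tlE cd x K (𝟙_ V)).symm (w ≫ (ρ_ _).inv) = (ω.obj x ◁ w) ≫ cd.ev x := by
    intro w
    rw [tlE_symm_apply]
    monoidal
  have := (tlE cd x K (𝟙_ V)).symm.injective (a₁ := u ≫ (ρ_ _).inv)
    (a₂ := v ≫ (ρ_ _).inv) (by rw [key, key, h])
  simpa using congrArg (· ≫ (ρ_ (cd.dual x)).hom) this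

lemma ev_dmap {x y : D} (f : x ⟶ y) :
    (ω.map f ▷ cd.dual y) ≫ cd.ev y = (ω.obj x ◁ cd.dmap f) ≫ cd.ev x := by
  rw [cd.dmap_spec]
  symm
  calc ω.obj x ◁ ((λ_ (cd.dual y)).inv ≫ (cd.coev x ▷ cd.dual y) ≫
        (α_ (cd.dual x) (ω.obj x) (cd.dual y)).hom ≫ (cd.dual x ◁ (ω.map f ▷ cd.dual y)) ≫
        (cd.dual x ◁ cd.ev y) ≫ (ρ_ (cd.dual x)).hom) ≫ cd.ev x
      = 𝟙 _ ⊗≫ ω.obj x ◁ cd.coev x ▷ cd.dual y ⊗≫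
        ((ω.obj x ⊗ cd.dual x) ◁ ((ω.map f ▷ cd.dual y) ≫ cd.ev y) ≫ cd.ev x ▷ 𝟙_ V) ⊗≫
        𝟙 _ := by
        monoidal
    _ = 𝟙 _ ⊗≫ ω.obj x ◁ cd.coev x ▷ cd.dual y ⊗≫
        (cd.ev x ▷ (ω.obj x ⊗ cd.dual y) ≫ 𝟙_ V ◁ ((ω.map f ▷ cd.dual y) ≫ cd.ev y)) ⊗≫
        𝟙 _ := by
        rw [whisker_exchange]
    _ = 𝟙 _ ⊗≫ (ω.obj x ◁ cd.coev x ⊗≫ cd.ev x ▷ ω.obj x) ▷ cd.dual y ⊗≫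
        ((ω.map f ▷ cd.dual y) ≫ cd.ev y) := by
        monoidal
    _ = (ω.map f ▷ cd.dual y) ≫ cd.ev y := by
        rw [zig'']; monoidal

lemma coev_dmap {x y : D} (f : x ⟶ y) :
    cd.coev y ≫ (cd.dmap f ▷ ω.obj y) = cd.coev x ≫ (cd.dual x ◁ ω.map f) := by
  rw [cd.dmap_spec]
  calc cd.coev y ≫ (((λ_ (cd.dual y)).inv ≫ (cd.coev x ▷ cd.dual y) ≫
        (α_ (cd.dual x) (ω.obj x) (cd.dual y)).hom ≫ (cd.dual x ◁ (ω.map f ▷ cd.dual y)) ≫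
        (cd.dual x ◁ cd.ev y) ≫ (ρ_ (cd.dual x)).hom) ▷ ω.obj y)
      = 𝟙 _ ⊗≫ (𝟙_ V ◁ cd.coev y ≫ cd.coev x ▷ (cd.dual y ⊗ ω.obj y)) ⊗≫
        cd.dual x ◁ (ω.map f ▷ (cd.dual y ⊗ ω.obj y)) ⊗≫
        cd.dual x ◁ (cd.ev y ▷ ω.obj y) ⊗≫ 𝟙 _ := by
        monoidal
    _ = 𝟙 _ ⊗≫ cd.coev x ▷ 𝟙_ V ⊗≫
        ((cd.dual x ⊗ ω.obj x) ◁ cd.coev y ≫ (cd.dual x ◁ ω.map f) ▷ (cd.dual y ⊗ ω.obj y)) ⊗≫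
        cd.dual x ◁ (cd.ev y ▷ ω.obj y) ⊗≫ 𝟙 _ := by
        rw [whisker_exchange]; monoidal
    _ = 𝟙 _ ⊗≫ cd.coev x ⊗≫ (cd.dual x ◁ ω.map f) ⊗≫
        cd.dual x ◁ (ω.obj y ◁ cd.coev y ⊗≫ cd.ev y ▷ ω.obj y) ⊗≫ 𝟙 _ := by
        rw [whisker_exchange]; monoidal
    _ = cd.coev x ≫ (cd.dual x ◁ ω.map f) := by
        rw [zig'']; monoidal

/-- Maps out of `T M` are determined by composition with the universal family. -/
lemma T_hom_ext {M N : V} (g₁ g₂ : cd.T.obj M ⟶ N)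
    (h : ∀ x : D, cd.i x M ≫ g₁ = cd.i x M ≫ g₂) : g₁ = g₂ := by
  obtain ⟨g, -, hu⟩ := cd.universal M N (fun x => cd.i x M ≫ g₁)
    (fun {x y} f => by
      rw [← Category.assoc, ← Category.assoc, cd.dinat f M])
  rw [hu g₁ (fun x => rfl), hu g₂ (fun x => (h x).symm)]

/-- Whiskered version of `T_hom_ext`, using the dualizability of `ω x`. -/
lemma T_whisker_ext (x : D) {M : V} {N : V}
    (g₁ g₂ : (ω.obj x ⊗ cd.T.obj M) ⊗ cd.dual x ⟶ N)
    (h : ∀ y : D, ((ω.obj x ◁ cd.i y M) ▷ cd.dual x) ≫ g₁ =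
      ((ω.obj x ◁ cd.i y M) ▷ cd.dual x) ≫ g₂) : g₁ = g₂ := by
  have e1 : trE cd x _ _ g₁ = trE cd x _ _ g₂ := by
    have e2 : tlE cd x _ _ (trE cd x _ _ g₁) = tlE cd x _ _ (trE cd x _ _ g₂) := by
      apply T_hom_ext
      intro y
      rw [← tlE_pre, ← tlE_pre, ← trE_pre, ← trE_pre, h y]
    exact (tlE cd x _ _).injective e2
  exact (trE cd x _ _).injective e1

lemma par_nat_x {x y : D} (f : x ⟶ y) (M : V) :
    (ω.map f ▷ M) ≫ par cd y M = par cd x M ≫ (cd.T.obj M ◁ ω.map f) := by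
  simp only [par]
  calc (ω.map f ▷ M) ≫ (ρ_ (ω.obj y ⊗ M)).inv ≫ ((ω.obj y ⊗ M) ◁ cd.coev y) ≫
        (α_ (ω.obj y ⊗ M) (cd.dual y) (ω.obj y)).inv ≫ (cd.i y M ▷ ω.obj y)
      = 𝟙 _ ⊗≫ ((ω.map f ▷ M) ▷ 𝟙_ V ≫ (ω.obj y ⊗ M) ◁ cd.coev y) ⊗≫
        cd.i y M ▷ ω.obj y ⊗≫ 𝟙 _ := by monoidal
    _ = 𝟙 _ ⊗≫ (tensorObj (ω.obj x) M ◁ cd.coev y ≫ (ω.map f ▷ M) ▷ (cd.dual y ⊗ ω.obj y)) ⊗≫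
        cd.i y M ▷ ω.obj y ⊗≫ 𝟙 _ := by rw [← whisker_exchange]
    _ = 𝟙 _ ⊗≫ tensorObj (ω.obj x) M ◁ cd.coev y ⊗≫
        ((((ω.map f ▷ M) ▷ cd.dual y) ≫ cd.i y M) ▷ ω.obj y) ⊗≫ 𝟙 _ := by monoidal
    _ = 𝟙 _ ⊗≫ tensorObj (ω.obj x) M ◁ cd.coev y ⊗≫
        (((tensorObj (ω.obj x) M ◁ cd.dmap f) ≫ cd.i x M) ▷ ω.obj y) ⊗≫ 𝟙 _ := by
        rw [cd.dinat f M]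
    _ = 𝟙 _ ⊗≫ tensorObj (ω.obj x) M ◁ (cd.coev y ≫ (cd.dmap f ▷ ω.obj y)) ⊗≫
        cd.i x M ▷ ω.obj y ⊗≫ 𝟙 _ := by monoidal
    _ = 𝟙 _ ⊗≫ tensorObj (ω.obj x) M ◁ (cd.coev x ≫ (cd.dual x ◁ ω.map f)) ⊗≫
        cd.i x M ▷ ω.obj y ⊗≫ 𝟙 _ := by rw [coev_dmap]
    _ = 𝟙 _ ⊗≫ tensorObj (ω.obj x) M ◁ cd.coev x ⊗≫
        ((tensorObj (tensorObj (ω.obj x) M) (cd.dual x) ◁ ω.map f) ≫ (cd.i x M ▷ ω.obj y)) ⊗≫ 𝟙 _ := by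
        monoidal
    _ = 𝟙 _ ⊗≫ tensorObj (ω.obj x) M ◁ cd.coev x ⊗≫
        (cd.i x M ▷ ω.obj x ≫ cd.T.obj M ◁ ω.map f) ⊗≫ 𝟙 _ := by rw [whisker_exchange]
    _ = ((ρ_ (ω.obj x ⊗ M)).inv ≫ (tensorObj (ω.obj x) M ◁ cd.coev x) ≫
        (α_ (ω.obj x ⊗ M) (cd.dual x) (ω.obj x)).inv ≫ (cd.i x M ▷ ω.obj x)) ≫
        (cd.T.obj M ◁ ω.map f) := by monoidal

lemma ev_d0 : (ω.obj (𝟙_ D) ◁ cd.d0) ≫ cd.ev (𝟙_ D) =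
    (ρ_ (ω.obj (𝟙_ D))).hom ≫ OplaxMonoidal.η ω := by
  have h := cd.d0_spec
  rw [MonoidalCategory.tensorHom_def, Category.assoc] at h
  rw [← cancel_epi (LaxMonoidal.ε ω ▷ 𝟙_ V), ← Category.assoc, ← Category.assoc]
  rw [Category.assoc, h]
  simp [MonoidalCategory.whiskerRight_id, unitors_equal]

/-- Transposing a comodule counit condition. -/
lemma tog_counit {x : D} {P : V} (β : ω.obj x ⊗ 𝟙_ V ⟶ P ⊗ ω.obj x) (ε' : P ⟶ 𝟙_ V)
    (hc : β ≫ (ε' ▷ ω.obj x) ≫ (λ_ (ω.obj x)).hom = (ρ_ (ω.obj x)).hom) :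
    (trE cd x _ _).symm β ≫ ε' = ((ρ_ (ω.obj x)).hom ▷ cd.dual x) ≫ cd.ev x := by
  have hβ : β ≫ (ε' ▷ ω.obj x) = (ρ_ (ω.obj x)).hom ≫ (λ_ (ω.obj x)).inv := by
    rw [← cancel_mono (λ_ (ω.obj x)).hom]
    simpa using hc
  rw [← trE_symm_comp, hβ, trE_symm_apply]
  monoidal

/-- Transposing against `d0`. -/
lemma tog_d0 {P M : V} (β : ω.obj (𝟙_ D) ⊗ M ⟶ P ⊗ ω.obj (𝟙_ D)) :
    (ρ_ (ω.obj (𝟙_ D) ⊗ M)).inv ≫ (tensorObj (ω.obj (𝟙_ D)) M ◁ cd.d0) ≫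
      (trE cd (𝟙_ D) _ _).symm β = β ≫ (P ◁ OplaxMonoidal.η ω) ≫ (ρ_ P).hom := by
  rw [trE_symm_apply]
  calc (ρ_ (ω.obj (𝟙_ D) ⊗ M)).inv ≫ (tensorObj (ω.obj (𝟙_ D)) M ◁ cd.d0) ≫
        (β ▷ cd.dual (𝟙_ D)) ≫ (α_ P (ω.obj (𝟙_ D)) (cd.dual (𝟙_ D))).hom ≫
        (P ◁ cd.ev (𝟙_ D)) ≫ (ρ_ P).hom
      = 𝟙 _ ⊗≫ ((tensorObj (ω.obj (𝟙_ D)) M ◁ cd.d0) ≫ (β ▷ cd.dual (𝟙_ D))) ⊗≫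
        P ◁ cd.ev (𝟙_ D) ⊗≫ 𝟙 _ := by monoidal
    _ = 𝟙 _ ⊗≫ (β ▷ 𝟙_ V ≫ tensorObj P (ω.obj (𝟙_ D)) ◁ cd.d0) ⊗≫
        P ◁ cd.ev (𝟙_ D) ⊗≫ 𝟙 _ := by rw [← whisker_exchange]
    _ = 𝟙 _ ⊗≫ β ▷ 𝟙_ V ⊗≫ P ◁ ((ω.obj (𝟙_ D) ◁ cd.d0) ≫ cd.ev (𝟙_ D)) ⊗≫ 𝟙 _ := by
        monoidal
    _ = 𝟙 _ ⊗≫ β ▷ 𝟙_ V ⊗≫ P ◁ ((ρ_ (ω.obj (𝟙_ D))).hom ≫ OplaxMonoidal.η ω) ⊗≫ 𝟙 _ := by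
        rw [ev_d0]
    _ = β ≫ (P ◁ OplaxMonoidal.η ω) ≫ (ρ_ P).hom := by monoidal

lemma trE_symm_pre (x : D) {X X' Z : V} (u : X ⟶ X') (f : X' ⟶ Z ⊗ ω.obj x) :
    (trE cd x X Z).symm (u ≫ f) = (u ▷ cd.dual x) ≫ (trE cd x X' Z).symm f := by
  letI := cd.pairing x
  exact tensorRightHomEquiv_symm_naturality u f

lemma trE_ev (x : D) : trE cd x (ω.obj x) (𝟙_ V) (cd.ev x) = (λ_ (ω.obj x)).inv := by
  rw [trE_apply, ← cancel_mono (λ_ (ω.obj x)).hom]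
  simpa using cd.zig x

/-- Transposes intertwine dinaturality in `D` with the comodule-style naturality. -/
lemma tog_dinat {x y : D} (f : x ⟶ y) {M P : V}
    (β1 : ω.obj x ⊗ M ⟶ P ⊗ ω.obj x) (β2 : ω.obj y ⊗ M ⟶ P ⊗ ω.obj y)
    (hn : (ω.map f ▷ M) ≫ β2 = β1 ≫ (P ◁ ω.map f)) :
    ((ω.map f ▷ M) ▷ cd.dual y) ≫ (trE cd y _ _).symm β2 =
      ((ω.obj x ⊗ M) ◁ cd.dmap f) ≫ (trE cd x _ _).symm β1 := by
  rw [trE_symm_apply, trE_symm_apply]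
  calc _ = 𝟙 _ ⊗≫ (((ω.map f ▷ M) ≫ β2) ▷ cd.dual y) ⊗≫ P ◁ cd.ev y ⊗≫ 𝟙 _ := by
        monoidal
    _ = 𝟙 _ ⊗≫ ((β1 ≫ (P ◁ ω.map f)) ▷ cd.dual y) ⊗≫ P ◁ cd.ev y ⊗≫ 𝟙 _ := by rw [hn]
    _ = 𝟙 _ ⊗≫ β1 ▷ cd.dual y ⊗≫ P ◁ ((ω.map f ▷ cd.dual y) ≫ cd.ev y) ⊗≫ 𝟙 _ := by
        monoidal
    _ = 𝟙 _ ⊗≫ β1 ▷ cd.dual y ⊗≫ P ◁ ((ω.obj x ◁ cd.dmap f) ≫ cd.ev x) ⊗≫ 𝟙 _ := by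
        rw [ev_dmap]
    _ = 𝟙 _ ⊗≫ (β1 ▷ cd.dual y ≫ tensorObj P (ω.obj x) ◁ cd.dmap f) ⊗≫
        P ◁ cd.ev x ⊗≫ 𝟙 _ := by monoidal
    _ = 𝟙 _ ⊗≫ (tensorObj (ω.obj x) M ◁ cd.dmap f ≫ β1 ▷ cd.dual x) ⊗≫
        P ◁ cd.ev x ⊗≫ 𝟙 _ := by rw [whisker_exchange]
    _ = (tensorObj (ω.obj x) M ◁ cd.dmap f) ≫ (β1 ▷ cd.dual x) ≫
        (α_ P (ω.obj x) (cd.dual x)).hom ≫ (P ◁ cd.ev x) ≫ (ρ_ P).hom := by monoidal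

/-- Transposition intertwines the comultiplication-type formulas. -/
lemma tog_delta (x : D) {M N P Q : V}
    (β1 : ω.obj x ⊗ M ⟶ P ⊗ ω.obj x) (β2 : ω.obj x ⊗ N ⟶ Q ⊗ ω.obj x) :
    (trE cd x _ _).symm ((α_ (ω.obj x) M N).inv ≫ (β1 ▷ N) ≫ (α_ P (ω.obj x) N).hom ≫
      (P ◁ β2) ≫ (α_ P Q (ω.obj x)).inv) =
    𝟙 ((ω.obj x ⊗ (M ⊗ N)) ⊗ cd.dual x) ⊗≫
      ((ω.obj x ⊗ M) ◁ (cd.coev x ▷ (N ⊗ cd.dual x))) ⊗≫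
      ((trE cd x _ _).symm β1 ⊗ₘ (trE cd x _ _).symm β2) := by
  rw [trE_symm_apply, trE_symm_apply, trE_symm_apply, MonoidalCategory.tensorHom_def]
  calc _ = 𝟙 _ ⊗≫ β1 ▷ (N ⊗ cd.dual x) ⊗≫
        P ◁ ((ω.obj x ◁ cd.coev x ⊗≫ cd.ev x ▷ ω.obj x) ▷ (N ⊗ cd.dual x)) ⊗≫
        P ◁ (β2 ▷ cd.dual x) ⊗≫ P ◁ (Q ◁ cd.ev x) ⊗≫ 𝟙 _ := by
        rw [zig'']; monoidal
    _ = 𝟙 _ ⊗≫ (β1 ▷ (𝟙_ V ⊗ (N ⊗ cd.dual x)) ≫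
          tensorObj P (ω.obj x) ◁ (cd.coev x ▷ (N ⊗ cd.dual x))) ⊗≫
        P ◁ (cd.ev x ▷ (ω.obj x ⊗ (N ⊗ cd.dual x))) ⊗≫
        P ◁ (β2 ▷ cd.dual x) ⊗≫ P ◁ (Q ◁ cd.ev x) ⊗≫ 𝟙 _ := by monoidal
    _ = 𝟙 _ ⊗≫ (tensorObj (ω.obj x) M ◁ (cd.coev x ▷ (N ⊗ cd.dual x)) ≫
          β1 ▷ ((cd.dual x ⊗ ω.obj x) ⊗ (N ⊗ cd.dual x))) ⊗≫
        P ◁ (cd.ev x ▷ (ω.obj x ⊗ (N ⊗ cd.dual x))) ⊗≫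
        P ◁ (β2 ▷ cd.dual x) ⊗≫ P ◁ (Q ◁ cd.ev x) ⊗≫ 𝟙 _ := by
        rw [← whisker_exchange]
    _ = _ := by monoidal

/-- The double transpose of a map `(ω x ⊗ ω y) ⊗ M ⟶ R ⊗ (ω x ⊗ ω y)`. -/
noncomputable def Sd (x y : D) (M R : V)
    (L : (ω.obj x ⊗ ω.obj y) ⊗ M ⟶ R ⊗ (ω.obj x ⊗ ω.obj y)) :
    (ω.obj x ⊗ ((ω.obj y ⊗ M) ⊗ cd.dual y)) ⊗ cd.dual x ⟶ R :=
  𝟙 _ ⊗≫ L ▷ (cd.dual y ⊗ cd.dual x) ⊗≫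
    R ◁ (ω.obj x ◁ (cd.ev y ▷ cd.dual x)) ⊗≫ R ◁ cd.ev x ⊗≫ 𝟙 _

/-- Half transpose used to prove injectivity of `Sd`. -/
noncomputable def Kd (x y : D) (M R : V)
    (L : (ω.obj x ⊗ ω.obj y) ⊗ M ⟶ R ⊗ (ω.obj x ⊗ ω.obj y)) :
    ω.obj x ⊗ ((ω.obj y ⊗ M) ⊗ cd.dual y) ⟶ R ⊗ ω.obj x :=
  𝟙 _ ⊗≫ L ▷ cd.dual y ⊗≫ R ◁ (ω.obj x ◁ cd.ev y) ⊗≫ 𝟙 _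

lemma Sd_eq (x y : D) (M R : V)
    (L : (ω.obj x ⊗ ω.obj y) ⊗ M ⟶ R ⊗ (ω.obj x ⊗ ω.obj y)) :
    Sd cd x y M R L = (trE cd x _ _).symm (Kd cd x y M R L) := by
  rw [trE_symm_apply]
  simp only [Sd, Kd]
  monoidal

lemma Kd_eq (x y : D) (M R : V)
    (L : (ω.obj x ⊗ ω.obj y) ⊗ M ⟶ R ⊗ (ω.obj x ⊗ ω.obj y)) :
    Kd cd x y M R L = (α_ (ω.obj x) (ω.obj y ⊗ M) (cd.dual y)).inv ≫
      ((α_ (ω.obj x) (ω.obj y) M).inv ▷ cd.dual y) ≫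
      (trE cd y _ _).symm (L ≫ (α_ R (ω.obj x) (ω.obj y)).inv) := by
  rw [trE_symm_apply]
  simp only [Kd]
  monoidal

lemma Sd_inj (x y : D) (M R : V)
    {L₁ L₂ : (ω.obj x ⊗ ω.obj y) ⊗ M ⟶ R ⊗ (ω.obj x ⊗ ω.obj y)}
    (h : Sd cd x y M R L₁ = Sd cd x y M R L₂) : L₁ = L₂ := by
  rw [Sd_eq, Sd_eq] at h
  have h2 := (trE cd x _ _).symm.injective h
  rw [Kd_eq, Kd_eq, cancel_epi, cancel_epi] at h2
  have h3 := (trE cd y _ _).symm.injective h2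
  exact (cancel_mono (α_ R (ω.obj x) (ω.obj y)).inv).1 h3

lemma d2_pair (x y : D) :
    (ω.obj (x ⊗ y) ◁ cd.d2 x y) ≫ cd.ev (x ⊗ y) =
      (OplaxMonoidal.δ ω x y ▷ (cd.dual y ⊗ cd.dual x)) ≫
        (α_ (ω.obj x) (ω.obj y) (cd.dual y ⊗ cd.dual x)).hom ≫
        (ω.obj x ◁ (α_ (ω.obj y) (cd.dual y) (cd.dual x)).inv) ≫
        (ω.obj x ◁ (cd.ev y ▷ cd.dual x)) ≫ (ω.obj x ◁ (λ_ (cd.dual x)).hom) ≫ cd.ev x := by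
  rw [← cancel_epi (LaxMonoidal.μ ω x y ▷ (cd.dual y ⊗ cd.dual x))]
  have h := cd.d2_spec x y
  rw [← Category.assoc, ← Category.assoc] at h ⊢
  rw [h]
  rw [← Category.assoc, Functor.Monoidal.whiskerRight_μ_δ, Category.id_comp]
  simp only [Category.assoc]

/-- The left-hand side of the lift-tensor condition, double-transposed. -/
lemma tog_mu_lhs (x y : D) {M P Q R : V}
    (γ : ω.obj y ⊗ M ⟶ P ⊗ ω.obj y) (γ' : ω.obj x ⊗ P ⟶ Q ⊗ ω.obj x) (m : Q ⟶ R) :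
    ((ω.obj x ◁ (trE cd y _ _).symm γ) ▷ cd.dual x) ≫ (trE cd x _ _).symm γ' ≫ m =
      Sd cd x y M R ((α_ (ω.obj x) (ω.obj y) M).hom ≫ (ω.obj x ◁ γ) ≫
        (α_ (ω.obj x) P (ω.obj y)).inv ≫ (γ' ▷ ω.obj y) ≫ ((m ▷ ω.obj x) ▷ ω.obj y) ≫
        (α_ R (ω.obj x) (ω.obj y)).hom) := by
  rw [trE_symm_apply, trE_symm_apply]
  simp only [Sd]
  calc _ = 𝟙 _ ⊗≫ ω.obj x ◁ (γ ▷ cd.dual y) ▷ cd.dual x ⊗≫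
        ((tensorObj (ω.obj x) P ◁ cd.ev y ≫ γ' ▷ 𝟙_ V) ▷ cd.dual x) ⊗≫
        Q ◁ cd.ev x ⊗≫ m := by monoidal
    _ = 𝟙 _ ⊗≫ ω.obj x ◁ (γ ▷ cd.dual y) ▷ cd.dual x ⊗≫
        ((γ' ▷ (ω.obj y ⊗ cd.dual y) ≫ tensorObj Q (ω.obj x) ◁ cd.ev y) ▷ cd.dual x) ⊗≫
        Q ◁ cd.ev x ⊗≫ m := by rw [whisker_exchange]
    _ = 𝟙 _ ⊗≫ ω.obj x ◁ (γ ▷ cd.dual y) ▷ cd.dual x ⊗≫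
        γ' ▷ ((ω.obj y ⊗ cd.dual y) ⊗ cd.dual x) ⊗≫
        (Q ◁ ((ω.obj x ◁ (cd.ev y ▷ cd.dual x)) ≫ (ω.obj x ◁ (λ_ (cd.dual x)).hom) ≫
          cd.ev x) ≫ m ▷ 𝟙_ V) ⊗≫ 𝟙 _ := by monoidal
    _ = 𝟙 _ ⊗≫ ω.obj x ◁ (γ ▷ cd.dual y) ▷ cd.dual x ⊗≫
        γ' ▷ ((ω.obj y ⊗ cd.dual y) ⊗ cd.dual x) ⊗≫
        (m ▷ (ω.obj x ⊗ ((ω.obj y ⊗ cd.dual y) ⊗ cd.dual x)) ≫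
          R ◁ ((ω.obj x ◁ (cd.ev y ▷ cd.dual x)) ≫ (ω.obj x ◁ (λ_ (cd.dual x)).hom) ≫
          cd.ev x)) ⊗≫ 𝟙 _ := by rw [whisker_exchange]
    _ = _ := by monoidal

/-- The right-hand side of the lift-tensor condition, double-transposed (via `d2`). -/
lemma tog_mu_rhs (x y : D) {M R : V} (Γ : ω.obj (x ⊗ y) ⊗ M ⟶ R ⊗ ω.obj (x ⊗ y)) :
    Sd cd x y M R ((LaxMonoidal.μ ω x y ▷ M) ≫ Γ ≫ (R ◁ OplaxMonoidal.δ ω x y)) =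
      (𝟙 ((ω.obj x ⊗ ((ω.obj y ⊗ M) ⊗ cd.dual y)) ⊗ cd.dual x) ⊗≫
        ((LaxMonoidal.μ ω x y ▷ M) ▷ (cd.dual y ⊗ cd.dual x))) ≫
        ((ω.obj (x ⊗ y) ⊗ M) ◁ cd.d2 x y) ≫ (trE cd (x ⊗ y) _ _).symm Γ := by
  rw [trE_symm_apply]
  simp only [Sd]
  calc _ = 𝟙 _ ⊗≫ (LaxMonoidal.μ ω x y ▷ M) ▷ (cd.dual y ⊗ cd.dual x) ⊗≫
        Γ ▷ (cd.dual y ⊗ cd.dual x) ⊗≫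
        R ◁ ((OplaxMonoidal.δ ω x y ▷ (cd.dual y ⊗ cd.dual x)) ≫
          (α_ (ω.obj x) (ω.obj y) (cd.dual y ⊗ cd.dual x)).hom ≫
          (ω.obj x ◁ (α_ (ω.obj y) (cd.dual y) (cd.dual x)).inv) ≫
          (ω.obj x ◁ (cd.ev y ▷ cd.dual x)) ≫ (ω.obj x ◁ (λ_ (cd.dual x)).hom) ≫
          cd.ev x) ⊗≫ 𝟙 _ := by monoidal
    _ = 𝟙 _ ⊗≫ (LaxMonoidal.μ ω x y ▷ M) ▷ (cd.dual y ⊗ cd.dual x) ⊗≫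
        Γ ▷ (cd.dual y ⊗ cd.dual x) ⊗≫
        R ◁ ((ω.obj (x ⊗ y) ◁ cd.d2 x y) ≫ cd.ev (x ⊗ y)) ⊗≫ 𝟙 _ := by
        rw [d2_pair]
    _ = 𝟙 _ ⊗≫ (LaxMonoidal.μ ω x y ▷ M) ▷ (cd.dual y ⊗ cd.dual x) ⊗≫
        (Γ ▷ (cd.dual y ⊗ cd.dual x) ≫ tensorObj R (ω.obj (x ⊗ y)) ◁ cd.d2 x y) ⊗≫
        R ◁ cd.ev (x ⊗ y) ⊗≫ 𝟙 _ := by monoidal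
    _ = 𝟙 _ ⊗≫ (LaxMonoidal.μ ω x y ▷ M) ▷ (cd.dual y ⊗ cd.dual x) ⊗≫
        (tensorObj (ω.obj (x ⊗ y)) M ◁ cd.d2 x y ≫ Γ ▷ cd.dual (x ⊗ y)) ⊗≫
        R ◁ cd.ev (x ⊗ y) ⊗≫ 𝟙 _ := by rw [← whisker_exchange]
    _ = _ := by monoidal

end Aux

set_option maxHeartbeats 1000000 in
/-- The family `x ↦ (ω x, ∂_x)` defines a strong monoidal lift
`ω̃ : D ⥤ Comod_T` of `ω`, and the pair `(T, ω̃)` is universal among bimonads `T'`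
equipped with such a lift: for any bimonad `(T', μ', η', δ', ε')` on `V` and any lift
`β` of `ω` to `Comod_{T'}`, there is a unique morphism of bimonads `φ : T ⟶ T'` with
`β x M = (φ_M ⊗ id) ∘ ∂_x M` for all `x, M`. -/
theorem comodLift_universal
    [∀ X : V, Limits.PreservesColimits (tensorLeft X)]
    [∀ X : V, Limits.PreservesColimits (tensorRight X)] :
    -- `x ↦ (ω x, ∂ x)` is a lift of `ω` to `Comod_T`:
    IsComodLift fd.cd.T fd.μT fd.ηT fd.δT fd.εT (par fd.cd) ∧
    -- and it is universal:
    ∀ (T' : V ⥤ V)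
      (μ' : ∀ M : V, T'.obj (T'.obj M) ⟶ T'.obj M)
      (η' : ∀ M : V, M ⟶ T'.obj M)
      (δ' : ∀ M N : V, T'.obj (M ⊗ N) ⟶ T'.obj M ⊗ T'.obj N)
      (ε' : T'.obj (𝟙_ V) ⟶ 𝟙_ V),
      IsBimonadFam T' μ' η' δ' ε' →
      ∀ β : ∀ (x : D) (M : V), ω.obj x ⊗ M ⟶ T'.obj M ⊗ ω.obj x,
        IsComodLift T' μ' η' δ' ε' β →
        ∃! φ : ∀ M : V, fd.cd.T.obj M ⟶ T'.obj M,
          -- `φ` is natural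
          (∀ {M N : V} (f : M ⟶ N), fd.cd.T.map f ≫ φ N = φ M ≫ T'.map f) ∧
          -- `φ` is a morphism of monads
          (∀ M : V, fd.μT M ≫ φ M =
            fd.cd.T.map (φ M) ≫ φ (T'.obj M) ≫ μ' M) ∧
          (∀ M : V, fd.ηT M ≫ φ M = η' M) ∧
          -- `φ` is comonoidal
          (∀ M N : V, fd.δT M N ≫ (φ M ⊗ₘ φ N) = φ (M ⊗ N) ≫ δ' M N) ∧
          (fd.εT = φ (𝟙_ V) ≫ ε') ∧
          -- `φ` intertwines the lifts, i.e. `ω' = φ_♯ ∘ ω̃`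
          (∀ (x : D) (M : V), β x M = par fd.cd x M ≫ (φ M ▷ ω.obj x)) := by
  constructor
  · -- the lift `x ↦ (ω x, ∂ x)`
    refine ⟨?_, ?_, ?_, ?_, ?_, ?_⟩
    · -- nat_M
      intro x M N g
      rw [par_eq_trE, par_eq_trE, ← trE_comp, ← fd.cd.nat x g, trE_pre]
    · -- nat_x
      intro x y f M
      exact par_nat_x fd.cd f M
    · -- comod_tensor
      intro x M N
      have spp : ∀ (K : V), (trE fd.cd x _ _).symm (par fd.cd x K) = fd.cd.i x K := by
        intro K
        rw [par_eq_trE]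
        exact Equiv.symm_apply_apply _ _
      apply (trE fd.cd x _ _).symm.injective
      rw [trE_symm_comp, tog_delta, spp, spp, spp, fd.hδ x M N]
    · -- comod_unit
      intro x
      rw [par_eq_trE, ← Category.assoc, ← trE_comp, fd.hε x, trE_pre, trE_ev]
      simp
    · -- lift_tensor
      intro x y M
      refine Sd_inj fd.cd x y M (fd.cd.T.obj M) ?_
      rw [← tog_mu_lhs, tog_mu_rhs, par_eq_trE (cd := fd.cd) y M,
        par_eq_trE (cd := fd.cd) x (fd.cd.T.obj M),
        par_eq_trE (cd := fd.cd) (x ⊗ y) M,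
        Equiv.symm_apply_apply, Equiv.symm_apply_apply, Equiv.symm_apply_apply]
      exact fd.hμ x y M
    · -- lift_unit
      intro M
      rw [fd.hη M]
      have h := tog_d0 fd.cd (par fd.cd (𝟙_ D) M)
      rw [par_eq_trE (cd := fd.cd) (𝟙_ D) M, Equiv.symm_apply_apply] at h
      rw [par_eq_trE (cd := fd.cd) (𝟙_ D) M]
      rw [h]
  · -- universality
    intro T' μ' η' δ' ε' hT' β hβ
    have hU : ∀ M : V, ∃! g : fd.cd.T.obj M ⟶ T'.obj M,
        ∀ x, fd.cd.i x M ≫ g = (trE fd.cd x _ _).symm (β x M) := fun M =>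
      fd.cd.universal M (T'.obj M) (fun x => (trE fd.cd x _ _).symm (β x M))
        (fun {x y} f => tog_dinat fd.cd f (β x M) (β y M) (hβ.nat_x f M))
    set φ : ∀ M : V, fd.cd.T.obj M ⟶ T'.obj M := fun M => (hU M).exists.choose with hφdef
    have hφ : ∀ (M : V) (x : D),
        fd.cd.i x M ≫ φ M = (trE fd.cd x _ _).symm (β x M) := fun M =>
      (hU M).exists.choose_spec
    have hint : ∀ (x : D) (M : V), β x M = par fd.cd x M ≫ (φ M ▷ ω.obj x) := by
      intro x M
      rw [par_eq_trE, ← trE_comp, hφ, Equiv.apply_symm_apply]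
    have hnat : ∀ {M N : V} (f : M ⟶ N),
        fd.cd.T.map f ≫ φ N = φ M ≫ T'.map f := by
      intro M N f
      apply T_hom_ext
      intro x
      rw [← Category.assoc, ← fd.cd.nat x f, Category.assoc, hφ, ← trE_symm_pre,
        hβ.nat_M x f, trE_symm_comp, ← hφ, Category.assoc]
    refine ⟨φ, ⟨fun {M N} f => hnat f, ?_, ?_, ?_, ?_, hint⟩, ?_⟩
    · -- μ-compatibility
      intro M
      apply T_hom_ext
      intro x
      apply T_whisker_ext fd.cd x
      intro y
      have l1 := fd.hμ x y M
      calc ((ω.obj x ◁ fd.cd.i y M) ▷ fd.cd.dual x) ≫ fd.cd.i x (fd.cd.T.obj M) ≫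
            fd.μT M ≫ φ M
          = (((ω.obj x ◁ fd.cd.i y M) ▷ fd.cd.dual x) ≫ fd.cd.i x (fd.cd.T.obj M) ≫
            fd.μT M) ≫ φ M := by simp only [Category.assoc]
        _ = ((𝟙 ((ω.obj x ⊗ ((ω.obj y ⊗ M) ⊗ fd.cd.dual y)) ⊗ fd.cd.dual x) ⊗≫
              ((LaxMonoidal.μ ω x y ▷ M) ▷ (fd.cd.dual y ⊗ fd.cd.dual x))) ≫
              ((ω.obj (x ⊗ y) ⊗ M) ◁ fd.cd.d2 x y) ≫ fd.cd.i (x ⊗ y) M) ≫ φ M := by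
            rw [l1]
        _ = (𝟙 ((ω.obj x ⊗ ((ω.obj y ⊗ M) ⊗ fd.cd.dual y)) ⊗ fd.cd.dual x) ⊗≫
              ((LaxMonoidal.μ ω x y ▷ M) ▷ (fd.cd.dual y ⊗ fd.cd.dual x))) ≫
              ((ω.obj (x ⊗ y) ⊗ M) ◁ fd.cd.d2 x y) ≫
              (trE fd.cd (x ⊗ y) _ _).symm (β (x ⊗ y) M) := by
            simp only [Category.assoc, hφ]
        _ = Sd fd.cd x y M (T'.obj M) ((LaxMonoidal.μ ω x y ▷ M) ≫ β (x ⊗ y) M ≫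
              (T'.obj M ◁ OplaxMonoidal.δ ω x y)) := (tog_mu_rhs fd.cd x y _).symm
        _ = Sd fd.cd x y M (T'.obj M) ((α_ (ω.obj x) (ω.obj y) M).hom ≫
              (ω.obj x ◁ β y M) ≫ (α_ (ω.obj x) (T'.obj M) (ω.obj y)).inv ≫
              (β x (T'.obj M) ▷ ω.obj y) ≫ ((μ' M ▷ ω.obj x) ▷ ω.obj y) ≫
              (α_ (T'.obj M) (ω.obj x) (ω.obj y)).hom) := by
            rw [hβ.lift_tensor x y M]
        _ = ((ω.obj x ◁ (trE fd.cd y _ _).symm (β y M)) ▷ fd.cd.dual x) ≫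
              (trE fd.cd x _ _).symm (β x (T'.obj M)) ≫ μ' M :=
            (tog_mu_lhs fd.cd x y _ _ _).symm
        _ = ((ω.obj x ◁ (fd.cd.i y M ≫ φ M)) ▷ fd.cd.dual x) ≫
              (fd.cd.i x (T'.obj M) ≫ φ (T'.obj M)) ≫ μ' M := by rw [hφ, hφ]
        _ = ((ω.obj x ◁ fd.cd.i y M) ▷ fd.cd.dual x) ≫ fd.cd.i x (fd.cd.T.obj M) ≫
              fd.cd.T.map (φ M) ≫ φ (T'.obj M) ≫ μ' M := by
            simp only [MonoidalCategory.whiskerLeft_comp, comp_whiskerRight, Category.assoc]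
            rw [← Category.assoc ((ω.obj x ◁ φ M) ▷ fd.cd.dual x), fd.cd.nat x (φ M)]
            simp only [Category.assoc]
    · -- η-compatibility
      intro M
      rw [fd.hη M]
      have h := tog_d0 fd.cd (β (𝟙_ D) M)
      rw [← hφ M (𝟙_ D)] at h
      simp only [Category.assoc]
      rw [h]
      exact hβ.lift_unit M
    · -- δ-compatibility
      intro M N
      apply T_hom_ext
      intro x
      calc fd.cd.i x (M ⊗ N) ≫ fd.δT M N ≫ (φ M ⊗ₘ φ N)
          = (fd.cd.i x (M ⊗ N) ≫ fd.δT M N) ≫ (φ M ⊗ₘ φ N) := by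
            simp only [Category.assoc]
        _ = (𝟙 ((ω.obj x ⊗ (M ⊗ N)) ⊗ fd.cd.dual x) ⊗≫
              ((ω.obj x ⊗ M) ◁ (fd.cd.coev x ▷ (N ⊗ fd.cd.dual x))) ⊗≫
              ((fd.cd.i x M ≫ φ M) ⊗ₘ (fd.cd.i x N ≫ φ N))) := by
            rw [fd.hδ x M N]
            simp only [monoidalComp, Category.assoc, tensorHom_comp_tensorHom]
        _ = 𝟙 ((ω.obj x ⊗ (M ⊗ N)) ⊗ fd.cd.dual x) ⊗≫
              ((ω.obj x ⊗ M) ◁ (fd.cd.coev x ▷ (N ⊗ fd.cd.dual x))) ⊗≫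
              ((trE fd.cd x _ _).symm (β x M) ⊗ₘ (trE fd.cd x _ _).symm (β x N)) := by
            rw [hφ, hφ]
        _ = (trE fd.cd x _ _).symm ((α_ (ω.obj x) M N).inv ≫ (β x M ▷ N) ≫
              (α_ (T'.obj M) (ω.obj x) N).hom ≫ (T'.obj M ◁ β x N) ≫
              (α_ (T'.obj M) (T'.obj N) (ω.obj x)).inv) := (tog_delta fd.cd x _ _).symm
        _ = (trE fd.cd x _ _).symm (β x (M ⊗ N) ≫ (δ' M N ▷ ω.obj x)) := by
            rw [hβ.comod_tensor x M N]
        _ = (trE fd.cd x _ _).symm (β x (M ⊗ N)) ≫ δ' M N := trE_symm_comp _ _ _ _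
        _ = fd.cd.i x (M ⊗ N) ≫ φ (M ⊗ N) ≫ δ' M N := by rw [← hφ, Category.assoc]
    · -- ε-compatibility
      apply T_hom_ext
      intro x
      rw [fd.hε x, ← Category.assoc, hφ,
        tog_counit fd.cd (β x (𝟙_ V)) ε' (hβ.comod_unit x)]
    · -- uniqueness
      intro φ' hφ'
      funext M
      apply T_hom_ext
      intro x
      rw [hφ, hφ'.2.2.2.2.2 x M, par_eq_trE, ← trE_comp, Equiv.symm_apply_apply]

end CData
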